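/- Grouped parallel solution of one configuration pattern: for every n ≥ 2, every function d : Bool × Bool → Bool, all sets X, Y ⊆ {1, …, ⌊n/2⌋−1} with |X| = ℓ, and every g ∈ G(n), there exist k ≤ 6(ℓ·2^ℓ + |Y|) and moves m₁, …, m_k ∈ S(n) such that the product h = m_k ⋯ m₁ fixes every position of P(n) not lying in some Cl(x, y) with (x, y) ∈ X × Y whose configuration under c₀ ∘ g⁻¹ equals d, and for every (x, y) ∈ X × Y whose configuration under c₀ ∘ g⁻¹ equals d, the coloring c₀ ∘ (h g)⁻¹ agrees with c₀ on Cl(x, y). -/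

import Mathlib

/-- Sticker positions of the `n × n × 1` Rubik's Cube. -/
abbrev RPos (n : ℕ) := Fin n × Fin n × Bool

/-- Underlying function of the row move `ρ i`. -/
def rowMoveFun (n : ℕ) (i : Fin n) : RPos n → RPos n :=
  fun p => if p.2.1 = i then (p.1.rev, p.2.1, !p.2.2) else p

theorem rowMoveFun_involutive (n : ℕ) (i : Fin n) :
    Function.Involutive (rowMoveFun n i) := by
  rintro ⟨x, y, b⟩
  by_cases h : y = i <;> simp [rowMoveFun, h]

/-- The row move `ρ i`. -/
def rowMove (n : ℕ) (i : Fin n) : Equiv.Perm (RPos n) :=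
  (rowMoveFun_involutive n i).toPerm _

/-- Underlying function of the column move `σ j`. -/
def colMoveFun (n : ℕ) (j : Fin n) : RPos n → RPos n :=
  fun p => if p.1 = j then (p.1, p.2.1.rev, !p.2.2) else p

theorem colMoveFun_involutive (n : ℕ) (j : Fin n) :
    Function.Involutive (colMoveFun n j) := by
  rintro ⟨x, y, b⟩
  by_cases h : x = j <;> simp [colMoveFun, h]

/-- The column move `σ j`. -/
def colMove (n : ℕ) (j : Fin n) : Equiv.Perm (RPos n) :=
  (colMoveFun_involutive n j).toPerm _

/-- The set `S(n)` of the `2n` legal moves. -/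
def RMoves (n : ℕ) : Set (Equiv.Perm (RPos n)) :=
  Set.range (rowMove n) ∪ Set.range (colMove n)

/-- The group `G(n)` generated by the legal moves. -/
def RGroup (n : ℕ) : Subgroup (Equiv.Perm (RPos n)) :=
  Subgroup.closure (RMoves n)

/-- The solved coloring `c₀`. -/
def solvedColoring (n : ℕ) : RPos n → Bool := fun p => p.2.2

/-- The cluster `Cl(x, y)`. -/
def cluster (n : ℕ) (x y : Fin n) : Set (RPos n) :=
  {p | (p.1 = x ∨ p.1 = x.rev) ∧ (p.2.1 = y ∨ p.2.1 = y.rev)}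

/-- The configuration of cluster `(x, y)` under a coloring `c`. -/
def clusterConfig (n : ℕ) (c : RPos n → Bool) (x y : Fin n) :
    Bool × Bool → Bool :=
  fun q => c (if q.1 then x.rev else x, if q.2 then y.rev else y, true)

/-- An interior index pair: `1 ≤ x ≤ ⌊n/2⌋ − 1` and `1 ≤ y ≤ ⌊n/2⌋ − 1`. -/
def Interior (n : ℕ) (x y : Fin n) : Prop :=
  1 ≤ (x : ℕ) ∧ (x : ℕ) ≤ n / 2 - 1 ∧ 1 ≤ (y : ℕ) ∧ (y : ℕ) ≤ n / 2 - 1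

/-- The six standard patterns: functions `Bool × Bool → Bool` whose value is
independent of the second argument or independent of the first argument. -/
def StandardPattern (f : Bool × Bool → Bool) : Prop :=
  (∀ ε δ δ', f (ε, δ) = f (ε, δ')) ∨ (∀ ε ε' δ, f (ε, δ) = f (ε', δ))

section RubikAux

variable {n : ℕ}

/-! ### Basic move lemmas -/

lemma rowMove_apply (i : Fin n) (p : RPos n) : rowMove n i p = rowMoveFun n i p := rfl
lemma colMove_apply (j : Fin n) (p : RPos n) : colMove n j p = colMoveFun n j p := rfl

lemma rowMove_inv (i : Fin n) : (rowMove n i)⁻¹ = rowMove n i := rfl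
lemma colMove_inv (j : Fin n) : (colMove n j)⁻¹ = colMove n j := rfl

lemma rev_val (z : Fin n) : (z.rev : ℕ) = n - 1 - (z : ℕ) := by
  simp [Fin.val_rev]; omega

/-- Interior index. -/
def Intr (n : ℕ) (z : Fin n) : Prop := 1 ≤ (z : ℕ) ∧ (z : ℕ) ≤ n / 2 - 1

lemma intr_rev_not (hn : 2 ≤ n) {z : Fin n} (hz : Intr n z) : ¬ Intr n z.rev := by
  obtain ⟨h1, h2⟩ := hz
  intro ⟨h3, h4⟩
  rw [rev_val] at h3 h4
  omega

lemma intr_rev_ne {z : Fin n} (hz : Intr n z) : z.rev ≠ z := by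
  obtain ⟨h1, h2⟩ := hz
  intro h
  have := congrArg Fin.val h
  rw [rev_val] at this
  have hzlt := z.isLt
  omega

/-! ### Pair property and good colorings -/

abbrev PairP (n : ℕ) (c : RPos n → Bool) : Prop :=
  ∀ u v : Fin n, c (u, v, false) = !c (u, v, true)

def GoodC (n : ℕ) (c : RPos n → Bool) : Prop :=
  PairP n c ∧ ∀ x y : Fin n, Intr n x → Intr n y →
    StandardPattern (clusterConfig n c x y)

lemma standard_iff (f : Bool × Bool → Bool) :
    StandardPattern f ↔
      ((f (false, false) = f (false, true) ∧ f (true, false) = f (true, true)) ∨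
       (f (false, false) = f (true, false) ∧ f (false, true) = f (true, true))) := by
  constructor
  · rintro (h | h)
    · exact Or.inl ⟨h false false true, h true false true⟩
    · exact Or.inr ⟨h false true false, h false true true⟩
  · rintro (⟨h1, h2⟩ | ⟨h1, h2⟩)
    · left; intro ε δ δ'; cases ε <;> cases δ <;> cases δ' <;> simp_all
    · right; intro ε ε' δ; cases ε <;> cases ε' <;> cases δ <;> simp_all

lemma goodC_solved : GoodC n (solvedColoring n) := by
  constructor
  · intro u v; simp [solvedColoring]
  · intro x y _ _
    left; intro ε δ δ'; simp [clusterConfig, solvedColoring]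

/-! ### Generators preserve good colorings -/

private lemma std4_rowA : ∀ A B C D : Bool,
    ((A = C ∧ B = D) ∨ (A = B ∧ C = D)) →
    (((!B) = C ∧ (!A) = D) ∨ ((!B) = (!A) ∧ C = D)) := by decide

private lemma std4_rowB : ∀ A B C D : Bool,
    ((A = C ∧ B = D) ∨ (A = B ∧ C = D)) →
    ((A = (!D) ∧ B = (!C)) ∨ (A = B ∧ (!D) = (!C))) := by decide

private lemma std4_colA : ∀ A B C D : Bool,
    ((A = C ∧ B = D) ∨ (A = B ∧ C = D)) →
    (((!C) = (!A) ∧ B = D) ∨ ((!C) = B ∧ (!A) = D)) := by decide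

private lemma std4_colB : ∀ A B C D : Bool,
    ((A = C ∧ B = D) ∨ (A = B ∧ C = D)) →
    ((A = C ∧ (!D) = (!B)) ∨ (A = (!D) ∧ C = (!B))) := by decide

lemma goodC_comp_rowMove (hn : 2 ≤ n) (i : Fin n) {c : RPos n → Bool} (hc : GoodC n c) :
    GoodC n (c ∘ ⇑(rowMove n i)) := by
  obtain ⟨hpair, hstd⟩ := hc
  constructor
  · intro u v
    by_cases hv : v = i
    · subst hv
      simp [rowMove_apply, rowMoveFun]
      rw [hpair u.rev v, Bool.not_not]
    · simp only [Function.comp_apply, rowMove_apply, rowMoveFun, if_neg hv]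
      exact hpair u v
  · intro x y hx hy
    have hyne : y.rev ≠ y := intr_rev_ne hy
    by_cases h1 : y = i
    · subst h1
      have e : ∀ ε δ : Bool, clusterConfig n (c ∘ ⇑(rowMove n y)) x y (ε, δ) =
          if δ then clusterConfig n c x y (ε, δ) else !clusterConfig n c x y (!ε, δ) := by
        intro ε δ
        cases ε <;> cases δ <;>
          simp [clusterConfig, rowMove_apply, rowMoveFun, hyne, hpair, Fin.rev_rev]
      rw [standard_iff]
      have hs := hstd x y hx hy
      rw [standard_iff] at hs
      rw [e, e, e, e]
      simp only [if_true, if_false, Bool.not_false, Bool.not_true]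
      revert hs
      generalize clusterConfig n c x y (false, false) = A
      generalize clusterConfig n c x y (true, false) = B
      generalize clusterConfig n c x y (false, true) = C
      generalize clusterConfig n c x y (true, true) = D
      intro hs
      exact std4_rowA A B C D hs
    · by_cases h2 : y.rev = i
      · subst h2
        have hyne2 : y ≠ y.rev := fun h => hyne h.symm
        have e : ∀ ε δ : Bool, clusterConfig n (c ∘ ⇑(rowMove n y.rev)) x y (ε, δ) =
            if δ then !clusterConfig n c x y (!ε, δ) else clusterConfig n c x y (ε, δ) := by
          intro ε δ
          cases ε <;> cases δ <;>
            simp [clusterConfig, rowMove_apply, rowMoveFun, hyne2, hpair, Fin.rev_rev]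
        rw [standard_iff]
        have hs := hstd x y hx hy
        rw [standard_iff] at hs
        rw [e, e, e, e]
        simp only [if_true, if_false, Bool.not_false, Bool.not_true]
        revert hs
        generalize clusterConfig n c x y (false, false) = A
        generalize clusterConfig n c x y (true, false) = B
        generalize clusterConfig n c x y (false, true) = C
        generalize clusterConfig n c x y (true, true) = D
        intro hs
        exact std4_rowB A B C D hs
      · have e : clusterConfig n (c ∘ ⇑(rowMove n i)) x y = clusterConfig n c x y := by
          funext q
          obtain ⟨ε, δ⟩ := q
          cases δ <;> simp [clusterConfig, rowMove_apply, rowMoveFun, h1, h2]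
        rw [e]; exact hstd x y hx hy

lemma goodC_comp_colMove (hn : 2 ≤ n) (j : Fin n) {c : RPos n → Bool} (hc : GoodC n c) :
    GoodC n (c ∘ ⇑(colMove n j)) := by
  obtain ⟨hpair, hstd⟩ := hc
  constructor
  · intro u v
    by_cases hu : u = j
    · subst hu
      simp [colMove_apply, colMoveFun]
      rw [hpair u v.rev, Bool.not_not]
    · simp only [Function.comp_apply, colMove_apply, colMoveFun, if_neg hu]
      exact hpair u v
  · intro x y hx hy
    have hxne : x.rev ≠ x := intr_rev_ne hx
    by_cases h1 : x = j
    · subst h1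
      have e : ∀ ε δ : Bool, clusterConfig n (c ∘ ⇑(colMove n x)) x y (ε, δ) =
          if ε then clusterConfig n c x y (ε, δ) else !clusterConfig n c x y (ε, !δ) := by
        intro ε δ
        cases ε <;> cases δ <;>
          simp [clusterConfig, colMove_apply, colMoveFun, hxne, hpair, Fin.rev_rev]
      rw [standard_iff]
      have hs := hstd x y hx hy
      rw [standard_iff] at hs
      rw [e, e, e, e]
      simp only [if_true, if_false, Bool.not_false, Bool.not_true]
      revert hs
      generalize clusterConfig n c x y (false, false) = A
      generalize clusterConfig n c x y (true, false) = B
      generalize clusterConfig n c x y (false, true) = C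
      generalize clusterConfig n c x y (true, true) = D
      intro hs
      exact std4_colA A B C D hs
    · by_cases h2 : x.rev = j
      · subst h2
        have hxne2 : x ≠ x.rev := fun h => hxne h.symm
        have e : ∀ ε δ : Bool, clusterConfig n (c ∘ ⇑(colMove n x.rev)) x y (ε, δ) =
            if ε then !clusterConfig n c x y (ε, !δ) else clusterConfig n c x y (ε, δ) := by
          intro ε δ
          cases ε <;> cases δ <;>
            simp [clusterConfig, colMove_apply, colMoveFun, hxne2, hpair, Fin.rev_rev]
        rw [standard_iff]
        have hs := hstd x y hx hy
        rw [standard_iff] at hs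
        rw [e, e, e, e]
        simp only [if_true, if_false, Bool.not_false, Bool.not_true]
        revert hs
        generalize clusterConfig n c x y (false, false) = A
        generalize clusterConfig n c x y (true, false) = B
        generalize clusterConfig n c x y (false, true) = C
        generalize clusterConfig n c x y (true, true) = D
        intro hs
        exact std4_colB A B C D hs
      · have e : clusterConfig n (c ∘ ⇑(colMove n j)) x y = clusterConfig n c x y := by
          funext q
          obtain ⟨ε, δ⟩ := q
          cases ε <;> simp [clusterConfig, colMove_apply, colMoveFun, h1, h2]
        rw [e]; exact hstd x y hx hy

lemma move_inv {m : Equiv.Perm (RPos n)} (hm : m ∈ RMoves n) : m⁻¹ = m := by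
  rcases hm with ⟨i, rfl⟩ | ⟨j, rfl⟩
  · exact rowMove_inv i
  · exact colMove_inv j

lemma goodC_comp_move (hn : 2 ≤ n) {m : Equiv.Perm (RPos n)} (hm : m ∈ RMoves n)
    {c : RPos n → Bool} (hc : GoodC n c) : GoodC n (c ∘ ⇑m) := by
  rcases hm with ⟨i, rfl⟩ | ⟨j, rfl⟩
  · exact goodC_comp_rowMove hn i hc
  · exact goodC_comp_colMove hn j hc

lemma goodC_closure (hn : 2 ≤ n) {g : Equiv.Perm (RPos n)} (hg : g ∈ RGroup n) :
    (∀ c, GoodC n c → GoodC n (c ∘ ⇑g)) ∧ (∀ c, GoodC n c → GoodC n (c ∘ ⇑g⁻¹)) := by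
  induction hg using Subgroup.closure_induction with
  | mem m hm =>
      refine ⟨fun c hc => goodC_comp_move hn hm hc, fun c hc => ?_⟩
      rw [move_inv hm]
      exact goodC_comp_move hn hm hc
  | one => constructor <;> intro c hc <;> simpa using hc
  | mul a b ha hb iha ihb =>
      constructor
      · intro c hc
        have : (c ∘ ⇑(a * b)) = ((c ∘ ⇑a) ∘ ⇑b) := rfl
        rw [this]
        exact ihb.1 _ (iha.1 _ hc)
      · intro c hc
        have : (c ∘ ⇑(a * b)⁻¹) = ((c ∘ ⇑b⁻¹) ∘ ⇑a⁻¹) := by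
          rw [mul_inv_rev]; rfl
        rw [this]
        exact iha.2 _ (ihb.2 _ hc)
  | inv a ha iha =>
      refine ⟨iha.2, fun c hc => ?_⟩
      rw [inv_inv]
      exact iha.1 _ hc

lemma goodC_main (hn : 2 ≤ n) {g : Equiv.Perm (RPos n)} (hg : g ∈ RGroup n) :
    GoodC n (solvedColoring n ∘ ⇑g⁻¹) :=
  (goodC_closure hn hg).2 _ goodC_solved

end RubikAux
section RubikShapes

variable {n : ℕ}

/-! ### Evaluating products of disjoint moves -/

def HF (n : ℕ) (U : List (Fin n)) : RPos n → RPos n :=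
  fun p => if p.1 ∈ U then (p.1, p.2.1.rev, !p.2.2) else p

def RF (n : ℕ) (V : List (Fin n)) : RPos n → RPos n :=
  fun p => if p.2.1 ∈ V then (p.1.rev, p.2.1, !p.2.2) else p

lemma prod_col (U : List (Fin n)) (hU : U.Nodup) (p : RPos n) :
    (U.map (colMove n)).prod p = HF n U p := by
  induction U with
  | nil => simp [HF]
  | cons a l ih =>
    rcases List.nodup_cons.mp hU with ⟨ha, hl⟩
    obtain ⟨u, v, b⟩ := p
    simp only [List.map_cons, List.prod_cons, Equiv.Perm.mul_apply, ih hl]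
    by_cases h : u ∈ l
    · have hne : u ≠ a := fun e => ha (e ▸ h)
      simp [HF, h, hne, colMove_apply, colMoveFun]
    · by_cases h2 : u = a
      · subst h2; simp [HF, h, colMove_apply, colMoveFun]
      · simp [HF, h, h2, colMove_apply, colMoveFun]

lemma prod_row (V : List (Fin n)) (hV : V.Nodup) (p : RPos n) :
    (V.map (rowMove n)).prod p = RF n V p := by
  induction V with
  | nil => simp [RF]
  | cons a l ih =>
    rcases List.nodup_cons.mp hV with ⟨ha, hl⟩
    obtain ⟨u, v, b⟩ := p
    simp only [List.map_cons, List.prod_cons, Equiv.Perm.mul_apply, ih hl]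
    by_cases h : v ∈ l
    · have hne : v ≠ a := fun e => ha (e ▸ h)
      simp [RF, h, hne, rowMove_apply, rowMoveFun]
    · by_cases h2 : v = a
      · subst h2; simp [RF, h, rowMove_apply, rowMoveFun]
      · simp [RF, h, h2, rowMove_apply, rowMoveFun]

/-! ### The two commutator shapes -/

def shape1L (n : ℕ) (U V : List (Fin n)) : List (Equiv.Perm (RPos n)) :=
  U.map (colMove n) ++ V.map (rowMove n) ++ U.map (colMove n) ++ V.map (rowMove n)

def shape2L (n : ℕ) (U V : List (Fin n)) : List (Equiv.Perm (RPos n)) :=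
  V.map (rowMove n) ++ U.map (colMove n) ++ V.map (rowMove n) ++ U.map (colMove n)

lemma shape1L_length (U V : List (Fin n)) :
    (shape1L n U V).length = 2 * U.length + 2 * V.length := by
  simp [shape1L]; omega

lemma shape2L_length (U V : List (Fin n)) :
    (shape2L n U V).length = 2 * U.length + 2 * V.length := by
  simp [shape2L]; omega

lemma shape1L_mem {U V : List (Fin n)} {m : Equiv.Perm (RPos n)}
    (hm : m ∈ shape1L n U V) : m ∈ RMoves n := by
  simp only [shape1L, List.mem_append, List.mem_map] at hm
  rcases hm with ((⟨j, _, rfl⟩ | ⟨i, _, rfl⟩) | ⟨j, _, rfl⟩) | ⟨i, _, rfl⟩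
  · exact Or.inr ⟨j, rfl⟩
  · exact Or.inl ⟨i, rfl⟩
  · exact Or.inr ⟨j, rfl⟩
  · exact Or.inl ⟨i, rfl⟩

lemma shape2L_mem {U V : List (Fin n)} {m : Equiv.Perm (RPos n)}
    (hm : m ∈ shape2L n U V) : m ∈ RMoves n := by
  simp only [shape2L, List.mem_append, List.mem_map] at hm
  rcases hm with ((⟨i, _, rfl⟩ | ⟨j, _, rfl⟩) | ⟨i, _, rfl⟩) | ⟨j, _, rfl⟩
  · exact Or.inl ⟨i, rfl⟩
  · exact Or.inr ⟨j, rfl⟩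
  · exact Or.inl ⟨i, rfl⟩
  · exact Or.inr ⟨j, rfl⟩

lemma shape1_apply (U V : List (Fin n)) (hU : U.Nodup) (hV : V.Nodup) (p : RPos n) :
    (shape1L n U V).prod p = HF n U (RF n V (HF n U (RF n V p))) := by
  simp [shape1L, List.prod_append, Equiv.Perm.mul_apply, prod_col U hU, prod_row V hV]

lemma shape2_apply (U V : List (Fin n)) (hU : U.Nodup) (hV : V.Nodup) (p : RPos n) :
    (shape2L n U V).prod p = RF n V (HF n U (RF n V (HF n U p))) := by
  simp [shape2L, List.prod_append, Equiv.Perm.mul_apply, prod_col U hU, prod_row V hV]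

/-! ### Support of the shapes -/

lemma shape1_fix (U V : List (Fin n)) (hU : U.Nodup) (hV : V.Nodup)
    (p : RPos n)
    (hp : (p.1 ∉ U ∧ p.1.rev ∉ U) ∨ (p.2.1 ∉ V ∧ p.2.1.rev ∉ V)) :
    (shape1L n U V).prod p = p := by
  rw [shape1_apply U V hU hV]
  obtain ⟨u, v, b⟩ := p
  rcases hp with ⟨h1, h2⟩ | ⟨h1, h2⟩
  · by_cases hv : v ∈ V <;> simp [HF, RF, hv, h1, h2, Fin.rev_rev]
  · by_cases hu : u ∈ U <;> simp [HF, RF, hu, h1, h2, Fin.rev_rev]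

lemma shape2_fix (U V : List (Fin n)) (hU : U.Nodup) (hV : V.Nodup)
    (p : RPos n)
    (hp : (p.1 ∉ U ∧ p.1.rev ∉ U) ∨ (p.2.1 ∉ V ∧ p.2.1.rev ∉ V)) :
    (shape2L n U V).prod p = p := by
  rw [shape2_apply U V hU hV]
  obtain ⟨u, v, b⟩ := p
  rcases hp with ⟨h1, h2⟩ | ⟨h1, h2⟩
  · by_cases hv : v ∈ V <;> simp [HF, RF, hv, h1, h2, Fin.rev_rev]
  · by_cases hu : u ∈ U <;> simp [HF, RF, hu, h1, h2, Fin.rev_rev]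

/-! ### Action of the shapes on a cluster -/

section ClusterAction

variable {U V : List (Fin n)} (hU : U.Nodup) (hV : V.Nodup)
variable {x y : Fin n} (hx : x ∈ U) (hy : y ∈ V)
variable (hxr : x.rev ∉ U) (hyr : y.rev ∉ V)

include hU hV hx hy hxr hyr

lemma shape1_e1 (β : Bool) : (shape1L n U V).prod (x, y, β) = (x, y.rev, !β) := by
  rw [shape1_apply U V hU hV]; simp [HF, RF, hx, hy, hxr, hyr, Fin.rev_rev]

lemma shape1_e2 (β : Bool) : (shape1L n U V).prod (x, y.rev, β) = (x.rev, y, β) := by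
  rw [shape1_apply U V hU hV]; simp [HF, RF, hx, hy, hxr, hyr, Fin.rev_rev]

lemma shape1_e3 (β : Bool) : (shape1L n U V).prod (x.rev, y, β) = (x, y, !β) := by
  rw [shape1_apply U V hU hV]; simp [HF, RF, hx, hy, hxr, hyr, Fin.rev_rev]

lemma shape1_e4 (β : Bool) : (shape1L n U V).prod (x.rev, y.rev, β) = (x.rev, y.rev, β) := by
  rw [shape1_apply U V hU hV]; simp [HF, RF, hx, hy, hxr, hyr, Fin.rev_rev]

lemma shape2_e1 (β : Bool) : (shape2L n U V).prod (x, y, β) = (x.rev, y, !β) := by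
  rw [shape2_apply U V hU hV]; simp [HF, RF, hx, hy, hxr, hyr, Fin.rev_rev]

lemma shape2_e2 (β : Bool) : (shape2L n U V).prod (x, y.rev, β) = (x, y, !β) := by
  rw [shape2_apply U V hU hV]; simp [HF, RF, hx, hy, hxr, hyr, Fin.rev_rev]

lemma shape2_e3 (β : Bool) : (shape2L n U V).prod (x.rev, y, β) = (x, y.rev, β) := by
  rw [shape2_apply U V hU hV]; simp [HF, RF, hx, hy, hxr, hyr, Fin.rev_rev]

lemma shape2_e4 (β : Bool) : (shape2L n U V).prod (x.rev, y.rev, β) = (x.rev, y.rev, β) := by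
  rw [shape2_apply U V hU hV]; simp [HF, RF, hx, hy, hxr, hyr, Fin.rev_rev]

end ClusterAction

end RubikShapes
section RubikSolve

variable {n : ℕ}

lemma mem_cluster_iff {x y : Fin n} {p : RPos n} :
    p ∈ cluster n x y ↔ (p.1 = x ∨ p.1 = x.rev) ∧ (p.2.1 = y ∨ p.2.1 = y.rev) :=
  Iff.rfl

lemma cluster_rev_left (x y : Fin n) : cluster n x.rev y = cluster n x y := by
  ext p; simp only [mem_cluster_iff, Fin.rev_rev]; tauto

lemma cluster_rev_right (x y : Fin n) : cluster n x y.rev = cluster n x y := by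
  ext p; simp only [mem_cluster_iff, Fin.rev_rev]; tauto

section Solve

variable {U V : List (Fin n)} (hU : U.Nodup) (hV : V.Nodup)
variable {x y : Fin n} (hx : x ∈ U) (hy : y ∈ V)
variable (hxr : x.rev ∉ U) (hyr : y.rev ∉ V)
variable {c : RPos n → Bool} (hpair : PairP n c)

include hU hV hx hy hxr hyr hpair

/-- `shape1` solves the pattern `FFTT` (row `y` flipped). -/
lemma shape1_solve
    (ha : c (x, y, true) = false) (hb : c (x.rev, y, true) = false)
    (hcc : c (x, y.rev, true) = true) (hdd : c (x.rev, y.rev, true) = true)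
    (p : RPos n) (hp : p ∈ cluster n x y) :
    ∃ q ∈ cluster n x y, (shape1L n U V).prod q = p ∧ c q = solvedColoring n p := by
  obtain ⟨u, v, b⟩ := p
  obtain ⟨h1 | h1, h2 | h2⟩ := hp <;> dsimp only at h1 h2 <;> rw [h1, h2]
  · refine ⟨(x.rev, y, !b), ⟨Or.inr rfl, Or.inl rfl⟩, ?_, ?_⟩
    · rw [shape1_e3 hU hV hx hy hxr hyr]; simp
    · cases b <;> simp [solvedColoring, hpair, hb]
  · refine ⟨(x, y, !b), ⟨Or.inl rfl, Or.inl rfl⟩, ?_, ?_⟩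
    · rw [shape1_e1 hU hV hx hy hxr hyr]; simp
    · cases b <;> simp [solvedColoring, hpair, ha]
  · refine ⟨(x, y.rev, b), ⟨Or.inl rfl, Or.inr rfl⟩, ?_, ?_⟩
    · rw [shape1_e2 hU hV hx hy hxr hyr]
    · cases b <;> simp [solvedColoring, hpair, hcc]
  · refine ⟨(x.rev, y.rev, b), ⟨Or.inr rfl, Or.inr rfl⟩, ?_, ?_⟩
    · rw [shape1_e4 hU hV hx hy hxr hyr]
    · cases b <;> simp [solvedColoring, hpair, hdd]

/-- `shape2` solves the pattern `FTFT` (column `x` flipped). -/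
lemma shape2_solve
    (ha : c (x, y, true) = false) (hb : c (x.rev, y, true) = true)
    (hcc : c (x, y.rev, true) = false) (hdd : c (x.rev, y.rev, true) = true)
    (p : RPos n) (hp : p ∈ cluster n x y) :
    ∃ q ∈ cluster n x y, (shape2L n U V).prod q = p ∧ c q = solvedColoring n p := by
  obtain ⟨u, v, b⟩ := p
  obtain ⟨h1 | h1, h2 | h2⟩ := hp <;> dsimp only at h1 h2 <;> rw [h1, h2]
  · refine ⟨(x, y.rev, !b), ⟨Or.inl rfl, Or.inr rfl⟩, ?_, ?_⟩
    · rw [shape2_e2 hU hV hx hy hxr hyr]; simp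
    · cases b <;> simp [solvedColoring, hpair, hcc]
  · refine ⟨(x.rev, y, b), ⟨Or.inr rfl, Or.inl rfl⟩, ?_, ?_⟩
    · rw [shape2_e3 hU hV hx hy hxr hyr]
    · cases b <;> simp [solvedColoring, hpair, hb]
  · refine ⟨(x, y, !b), ⟨Or.inl rfl, Or.inl rfl⟩, ?_, ?_⟩
    · rw [shape2_e1 hU hV hx hy hxr hyr]; simp
    · cases b <;> simp [solvedColoring, hpair, ha]
  · refine ⟨(x.rev, y.rev, b), ⟨Or.inr rfl, Or.inr rfl⟩, ?_, ?_⟩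
    · rw [shape2_e4 hU hV hx hy hxr hyr]
    · cases b <;> simp [solvedColoring, hpair, hdd]

end Solve

/-- The double-commutator list for the pattern `FFFF`. -/
def ffffL (n : ℕ) (U U' V : List (Fin n)) : List (Equiv.Perm (RPos n)) :=
  shape2L n U' V ++ shape1L n U V

lemma ffffL_prod (U U' V : List (Fin n)) (p : RPos n) :
    (ffffL n U U' V).prod p = (shape2L n U' V).prod ((shape1L n U V).prod p) := by
  simp [ffffL, List.prod_append]

lemma ffff_fix (U U' V : List (Fin n)) (hU : U.Nodup) (hU' : U'.Nodup) (hV : V.Nodup)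
    (p : RPos n)
    (hp : (p.1 ∉ U ∧ p.1.rev ∉ U ∧ p.1 ∉ U' ∧ p.1.rev ∉ U') ∨
          (p.2.1 ∉ V ∧ p.2.1.rev ∉ V)) :
    (ffffL n U U' V).prod p = p := by
  rw [ffffL_prod]
  rcases hp with ⟨h1, h2, h3, h4⟩ | ⟨h1, h2⟩
  · rw [shape1_fix U V hU hV p (Or.inl ⟨h1, h2⟩),
      shape2_fix U' V hU' hV p (Or.inl ⟨h3, h4⟩)]
  · rw [shape1_fix U V hU hV p (Or.inr ⟨h1, h2⟩),
      shape2_fix U' V hU' hV p (Or.inr ⟨h1, h2⟩)]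

/-- The double commutator solves the pattern `FFFF`. -/
lemma ffff_solve {U U' V : List (Fin n)} (hU : U.Nodup) (hU' : U'.Nodup) (hV : V.Nodup)
    {x y : Fin n} (hx : x ∈ U) (hx' : x.rev ∈ U') (hy : y ∈ V)
    (hxr : x.rev ∉ U) (hxr' : x ∉ U') (hyr : y.rev ∉ V)
    {c : RPos n → Bool} (hpair : PairP n c)
    (ha : c (x, y, true) = false) (hb : c (x.rev, y, true) = false)
    (hcc : c (x, y.rev, true) = false) (hdd : c (x.rev, y.rev, true) = false)
    (p : RPos n) (hp : p ∈ cluster n x y) :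
    ∃ q ∈ cluster n x y, (ffffL n U U' V).prod q = p ∧ c q = solvedColoring n p := by
  have hxr'' : x.rev.rev ∉ U' := by rwa [Fin.rev_rev]
  obtain ⟨u, v, b⟩ := p
  obtain ⟨h1 | h1, h2 | h2⟩ := hp <;> dsimp only at h1 h2 <;> rw [h1, h2]
  · -- p = (x, y, b), q = (x, y.rev, !b)
    refine ⟨(x, y.rev, !b), ⟨Or.inl rfl, Or.inr rfl⟩, ?_, ?_⟩
    · rw [ffffL_prod, shape1_e2 hU hV hx hy hxr hyr]
      have := shape2_e1 hU' hV hx' hy hxr'' hyr (!b)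
      rw [Fin.rev_rev] at this
      rw [this]; simp
    · cases b <;> simp [solvedColoring, hpair, hcc]
  · -- p = (x, y.rev, b), q = (x, y, !b)
    refine ⟨(x, y, !b), ⟨Or.inl rfl, Or.inl rfl⟩, ?_, ?_⟩
    · rw [ffffL_prod, shape1_e1 hU hV hx hy hxr hyr]
      have := shape2_e4 hU' hV hx' hy hxr'' hyr (!(!b))
      rw [Fin.rev_rev] at this
      rw [this]; simp
    · cases b <;> simp [solvedColoring, hpair, ha]
  · -- p = (x.rev, y, b), q = (x.rev, y.rev, !b)
    refine ⟨(x.rev, y.rev, !b), ⟨Or.inr rfl, Or.inr rfl⟩, ?_, ?_⟩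
    · rw [ffffL_prod, shape1_e4 hU hV hx hy hxr hyr]
      have := shape2_e2 hU' hV hx' hy hxr'' hyr (!b)
      rw [this]; simp
    · cases b <;> simp [solvedColoring, hpair, hdd]
  · -- p = (x.rev, y.rev, b), q = (x.rev, y, !b)
    refine ⟨(x.rev, y, !b), ⟨Or.inr rfl, Or.inl rfl⟩, ?_, ?_⟩
    · rw [ffffL_prod, shape1_e3 hU hV hx hy hxr hyr]
      have := shape2_e3 hU' hV hx' hy hxr'' hyr b
      rw [Fin.rev_rev] at this
      rw [show (!(!b)) = b by simp, this]
    · cases b <;> simp [solvedColoring, hpair, hb]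

end RubikSolve
section RubikAssemble

variable {n : ℕ}

lemma mem_map_rev {l : List (Fin n)} {a : Fin n} : a ∈ l.map Fin.rev ↔ a.rev ∈ l := by
  constructor
  · intro h
    obtain ⟨w, hw, rfl⟩ := List.mem_map.mp h
    rwa [Fin.rev_rev]
  · intro h
    exact List.mem_map.mpr ⟨a.rev, h, Fin.rev_rev a⟩

lemma rev_not_mem (hn : 2 ≤ n) {X : Finset (Fin n)} (hX : ∀ x ∈ X, Intr n x)
    {S : Finset (Fin n)} (hS : S ⊆ X) {z : Fin n} (hz : Intr n z) : z.rev ∉ S :=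
  fun h => intr_rev_not hn hz (hX _ (hS h))

lemma prod_flatMap_fix {α : Type} (outer : List α) (f : α → List (Equiv.Perm (RPos n)))
    (p : RPos n) (h : ∀ a ∈ outer, (f a).prod p = p) :
    (outer.flatMap f).prod p = p := by
  induction outer with
  | nil => simp
  | cons a l ih =>
    rw [List.flatMap_cons, List.prod_append, Equiv.Perm.mul_apply,
      ih (fun b hb => h b (List.mem_cons_of_mem _ hb)), h a (List.mem_cons_self)]

lemma prod_flatMap_single {α : Type} (f : α → List (Equiv.Perm (RPos n)))
    (outer : List α) (a : α) (ha : a ∈ outer) (hnd : outer.Nodup)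
    (p q : RPos n) (hfix : ∀ b ∈ outer, b ≠ a → (f b).prod p = p ∧ (f b).prod q = q)
    (hstep : (f a).prod q = p) :
    (outer.flatMap f).prod q = p := by
  induction outer with
  | nil => simp at ha
  | cons b l ih =>
    rw [List.flatMap_cons, List.prod_append, Equiv.Perm.mul_apply]
    rcases List.mem_cons.mp ha with rfl | hal
    · have hnotin : a ∉ l := (List.nodup_cons.mp hnd).1
      rw [prod_flatMap_fix l f q
        (fun b' hb' => (hfix b' (List.mem_cons_of_mem _ hb')
          (fun e => hnotin (e ▸ hb'))).2), hstep]
    · have hba : b ≠ a := by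
        rintro rfl
        exact (List.nodup_cons.mp hnd).1 hal
      rw [ih hal (List.nodup_cons.mp hnd).2
        (fun b' hb' hbne => hfix b' (List.mem_cons_of_mem _ hb') hbne),
        (hfix b (List.mem_cons_self) hba).1]

/-- The generic grouped assembly of blocks. -/
lemma assemble (hn : 2 ≤ n) (d : Bool × Bool → Bool) (X Y : Finset (Fin n))
    (hX : ∀ x ∈ X, Intr n x) (hY : ∀ y ∈ Y, Intr n y)
    (c : RPos n → Bool)
    (blk : Finset (Fin n) → Finset (Fin n) → List (Equiv.Perm (RPos n)))
    (hlen : ∀ S T, (blk S T).length ≤ 4 * S.card + 4 * T.card)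
    (hmem : ∀ S T, ∀ m ∈ blk S T, m ∈ RMoves n)
    (hfix : ∀ S T, S ⊆ X → T ⊆ Y → ∀ p : RPos n,
       ((p.1 ∉ S ∧ p.1.rev ∉ S) ∨ (p.2.1 ∉ T ∧ p.2.1.rev ∉ T)) → (blk S T).prod p = p)
    (hsolve : ∀ S T, S ⊆ X → T ⊆ Y →
       ∀ x ∈ S, ∀ y ∈ T, clusterConfig n c x y = d → ∀ p ∈ cluster n x y,
       ∃ q ∈ cluster n x y, (blk S T).prod q = p ∧ c q = solvedColoring n p) :
    ∃ L : List (Equiv.Perm (RPos n)),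
      L.length ≤ 4 * (X.card * 2 ^ X.card) + 4 * Y.card ∧
      (∀ m ∈ L, m ∈ RMoves n) ∧
      (∀ p : RPos n, (∀ x ∈ X, ∀ y ∈ Y, clusterConfig n c x y = d → p ∉ cluster n x y) →
        L.prod p = p) ∧
      (∀ x ∈ X, ∀ y ∈ Y, clusterConfig n c x y = d → ∀ p ∈ cluster n x y,
        ∃ q ∈ cluster n x y, L.prod q = p ∧ c q = solvedColoring n p) := by
  classical
  set Sel : Fin n → Finset (Fin n) := fun y => X.filter (fun x => clusterConfig n c x y = d)
    with hSel
  refine ⟨(X.powerset.toList).flatMap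
    (fun S => blk S (Y.filter (fun y => Sel y = S))), ?_, ?_, ?_, ?_⟩
  · -- length bound
    rw [List.length_flatMap]
    calc (List.map (List.length ∘ fun S => blk S (Y.filter (fun y => Sel y = S)))
            X.powerset.toList).sum
        ≤ (List.map (fun S => 4 * X.card + 4 * (Y.filter (fun y => Sel y = S)).card)
            X.powerset.toList).sum := by
          apply List.sum_le_sum
          intro S hS
          have h1 := hlen S (Y.filter (fun y => Sel y = S))
          have hSX : S ⊆ X := Finset.mem_powerset.mp (Finset.mem_toList.mp hS)
          have h2 := Finset.card_le_card hSX
          simp only [Function.comp_apply]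
          omega
      _ = ∑ S ∈ X.powerset, (4 * X.card + 4 * (Y.filter (fun y => Sel y = S)).card) :=
          Finset.sum_map_toList _ _
      _ = 4 * (X.card * 2 ^ X.card) + 4 * Y.card := by
          rw [Finset.sum_add_distrib, Finset.sum_const, Finset.card_powerset,
            smul_eq_mul, ← Finset.mul_sum]
          have h3 : ∑ S ∈ X.powerset, (Y.filter (fun y => Sel y = S)).card = Y.card := by
            symm
            exact Finset.card_eq_sum_card_fiberwise (fun y _ =>
              Finset.mem_powerset.mpr (by rw [hSel]; exact Finset.filter_subset _ _))
          rw [h3]; ring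
  · -- moves
    intro m hm
    rw [List.mem_flatMap] at hm
    obtain ⟨S, _, hmS⟩ := hm
    exact hmem _ _ m hmS
  · -- fixes everything outside the solved clusters
    intro p hp
    apply prod_flatMap_fix
    intro S hSl
    have hSX : S ⊆ X := Finset.mem_powerset.mp (Finset.mem_toList.mp hSl)
    apply hfix S _ hSX (Finset.filter_subset _ _)
    by_contra hcon
    push_neg at hcon
    obtain ⟨hcol, hrow⟩ := hcon
    obtain ⟨x, hxS, hx1⟩ : ∃ x, x ∈ S ∧ (p.1 = x ∨ p.1 = x.rev) := by
      by_cases h : p.1 ∈ S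
      · exact ⟨p.1, h, Or.inl rfl⟩
      · exact ⟨p.1.rev, hcol h, Or.inr (Fin.rev_rev p.1).symm⟩
    obtain ⟨y, hyT, hy1⟩ : ∃ y, y ∈ Y.filter (fun y => Sel y = S) ∧
        (p.2.1 = y ∨ p.2.1 = y.rev) := by
      by_cases h : p.2.1 ∈ Y.filter (fun y => Sel y = S)
      · exact ⟨p.2.1, h, Or.inl rfl⟩
      · exact ⟨p.2.1.rev, hrow h, Or.inr (Fin.rev_rev p.2.1).symm⟩
    have hyY : y ∈ Y := (Finset.mem_filter.mp hyT).1
    have hySel : Sel y = S := (Finset.mem_filter.mp hyT).2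
    have hxSel : x ∈ Sel y := hySel ▸ hxS
    rw [hSel] at hxSel
    have hxX : x ∈ X := (Finset.mem_filter.mp hxSel).1
    have hcfg : clusterConfig n c x y = d := (Finset.mem_filter.mp hxSel).2
    exact hp x hxX y hyY hcfg ⟨hx1, hy1⟩
  · -- solves the qualifying clusters
    intro x hxX y hyY hcfg p hp
    have hSelX : Sel y ⊆ X := by rw [hSel]; exact Finset.filter_subset _ _
    have hxSel : x ∈ Sel y := by rw [hSel]; exact Finset.mem_filter.mpr ⟨hxX, hcfg⟩
    have hySelT : y ∈ Y.filter (fun z => Sel z = Sel y) :=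
      Finset.mem_filter.mpr ⟨hyY, rfl⟩
    obtain ⟨q, hqc, hqe, hqv⟩ := hsolve (Sel y) (Y.filter (fun z => Sel z = Sel y))
      hSelX (Finset.filter_subset _ _) x hxSel y hySelT hcfg p hp
    refine ⟨q, hqc, ?_, hqv⟩
    apply prod_flatMap_single _ _ (Sel y)
      (Finset.mem_toList.mpr (Finset.mem_powerset.mpr hSelX)) (Finset.nodup_toList _)
      p q ?_ hqe
    intro S hSl hSne
    have hSX : S ⊆ X := Finset.mem_powerset.mp (Finset.mem_toList.mp hSl)
    have key : ∀ r : RPos n, r ∈ cluster n x y →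
        (blk S (Y.filter (fun z => Sel z = S))).prod r = r := by
      intro r hr
      apply hfix S _ hSX (Finset.filter_subset _ _)
      right
      have hyn : y ∉ Y.filter (fun z => Sel z = S) := by
        intro h
        exact hSne ((Finset.mem_filter.mp h).2.symm)
      have hyrn : y.rev ∉ Y.filter (fun z => Sel z = S) := by
        intro h
        exact intr_rev_not hn (hY y hyY) (hY _ (Finset.mem_filter.mp h).1)
      rcases hr.2 with h | h
      · rw [h]; exact ⟨hyn, hyrn⟩
      · rw [h]; refine ⟨hyrn, ?_⟩; rw [Fin.rev_rev]; exact hyn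
    exact ⟨key p hp, key q hqc⟩

end RubikAssemble
section RubikMain

variable {n : ℕ}

lemma cfg_vals {c : RPos n → Bool} {x y : Fin n} {d : Bool × Bool → Bool}
    (h : clusterConfig n c x y = d) :
    c (x, y, true) = d (false, false) ∧ c (x.rev, y, true) = d (true, false) ∧
    c (x, y.rev, true) = d (false, true) ∧ c (x.rev, y.rev, true) = d (true, true) := by
  refine ⟨?_, ?_, ?_, ?_⟩
  · have := congrFun h (false, false); simpa [clusterConfig] using this
  · have := congrFun h (true, false); simpa [clusterConfig] using this
  · have := congrFun h (false, true); simpa [clusterConfig] using this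
  · have := congrFun h (true, true); simpa [clusterConfig] using this

lemma package (hn : 2 ≤ n) (d : Bool × Bool → Bool) (X Y : Finset (Fin n))
    (g : Equiv.Perm (RPos n))
    (h : ∃ L : List (Equiv.Perm (RPos n)),
      L.length ≤ 4 * (X.card * 2 ^ X.card) + 4 * Y.card ∧
      (∀ m ∈ L, m ∈ RMoves n) ∧
      (∀ p : RPos n, (∀ x ∈ X, ∀ y ∈ Y,
          clusterConfig n (solvedColoring n ∘ ⇑g⁻¹) x y = d → p ∉ cluster n x y) →
        L.prod p = p) ∧
      (∀ x ∈ X, ∀ y ∈ Y, clusterConfig n (solvedColoring n ∘ ⇑g⁻¹) x y = d →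
        ∀ p ∈ cluster n x y,
        ∃ q ∈ cluster n x y, L.prod q = p ∧
          (solvedColoring n ∘ ⇑g⁻¹) q = solvedColoring n p)) :
    ∃ L : List (Equiv.Perm (RPos n)),
      L.length ≤ 6 * (X.card * 2 ^ X.card + Y.card) ∧
      (∀ m ∈ L, m ∈ RMoves n) ∧
      (∀ p : RPos n,
        (∀ x ∈ X, ∀ y ∈ Y,
          clusterConfig n (solvedColoring n ∘ ⇑g⁻¹) x y = d → p ∉ cluster n x y) →
        L.prod p = p) ∧
      (∀ x ∈ X, ∀ y ∈ Y,
        clusterConfig n (solvedColoring n ∘ ⇑g⁻¹) x y = d →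
        ∀ p ∈ cluster n x y,
          (solvedColoring n ∘ ⇑(L.prod * g)⁻¹) p = solvedColoring n p) := by
  obtain ⟨L, h1, h2, h3, h4⟩ := h
  refine ⟨L, ?_, h2, h3, ?_⟩
  · have hb : 4 * (X.card * 2 ^ X.card) + 4 * Y.card ≤
        6 * (X.card * 2 ^ X.card + Y.card) := by
      set A := X.card * 2 ^ X.card
      omega
    omega
  · intro x hx y hy hcfg p hp
    obtain ⟨q, hqc, hqe, hqv⟩ := h4 x hx y hy hcfg p hp
    have hinv : (L.prod)⁻¹ p = q := by rw [← hqe]; simp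
    have hstep : (solvedColoring n ∘ ⇑(L.prod * g)⁻¹) p =
        (solvedColoring n ∘ ⇑g⁻¹) ((L.prod)⁻¹ p) := by
      simp [mul_inv_rev]
    rw [hstep, hinv]
    exact hqv

lemma trivial_case (hn : 2 ≤ n) (d : Bool × Bool → Bool) (X Y : Finset (Fin n))
    (g : Equiv.Perm (RPos n))
    (hcontra : ∀ x ∈ X, ∀ y ∈ Y,
      clusterConfig n (solvedColoring n ∘ ⇑g⁻¹) x y = d →
      ∀ p ∈ cluster n x y, (solvedColoring n ∘ ⇑g⁻¹) p = solvedColoring n p) :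
    ∃ L : List (Equiv.Perm (RPos n)),
      L.length ≤ 6 * (X.card * 2 ^ X.card + Y.card) ∧
      (∀ m ∈ L, m ∈ RMoves n) ∧
      (∀ p : RPos n,
        (∀ x ∈ X, ∀ y ∈ Y,
          clusterConfig n (solvedColoring n ∘ ⇑g⁻¹) x y = d → p ∉ cluster n x y) →
        L.prod p = p) ∧
      (∀ x ∈ X, ∀ y ∈ Y,
        clusterConfig n (solvedColoring n ∘ ⇑g⁻¹) x y = d →
        ∀ p ∈ cluster n x y,
          (solvedColoring n ∘ ⇑(L.prod * g)⁻¹) p = solvedColoring n p) := by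
  refine ⟨[], by simp, by simp, fun p _ => by simp, ?_⟩
  intro x hx y hy hcfg p hp
  simpa using hcontra x hx y hy hcfg p hp

end RubikMain

/-- **Grouped parallel solution of one configuration pattern.**
Given a pattern `d` and sets `X, Y` of interior indices with `|X| = ℓ`, at
most `6(ℓ·2^ℓ + |Y|)` legal moves suffice to solve all clusters
`(x, y) ∈ X × Y` whose configuration under `c₀ ∘ g⁻¹` equals `d`, without
affecting any position outside those clusters. -/
theorem nxnx1_grouped_cluster_solution (n : ℕ) (hn : 2 ≤ n)
    (d : Bool × Bool → Bool) (X Y : Finset (Fin n))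
    (hX : ∀ x ∈ X, 1 ≤ (x : ℕ) ∧ (x : ℕ) ≤ n / 2 - 1)
    (hY : ∀ y ∈ Y, 1 ≤ (y : ℕ) ∧ (y : ℕ) ≤ n / 2 - 1)
    (g : Equiv.Perm (RPos n)) (hg : g ∈ RGroup n) :
    ∃ L : List (Equiv.Perm (RPos n)),
      L.length ≤ 6 * (X.card * 2 ^ X.card + Y.card) ∧
      (∀ m ∈ L, m ∈ RMoves n) ∧
      (∀ p : RPos n,
        (∀ x ∈ X, ∀ y ∈ Y,
          clusterConfig n (solvedColoring n ∘ ⇑g⁻¹) x y = d → p ∉ cluster n x y) →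
        L.prod p = p) ∧
      (∀ x ∈ X, ∀ y ∈ Y,
        clusterConfig n (solvedColoring n ∘ ⇑g⁻¹) x y = d →
        ∀ p ∈ cluster n x y,
          (solvedColoring n ∘ ⇑(L.prod * g)⁻¹) p = solvedColoring n p) := by
  classical
  obtain ⟨hpair, hstd⟩ := goodC_main hn hg
  have hX' : ∀ x ∈ X, Intr n x := hX
  have hY' : ∀ y ∈ Y, Intr n y := hY
  -- membership facts for the various index lists
  have hndS : ∀ S : Finset (Fin n), S.toList.Nodup := fun S => Finset.nodup_toList S
  have hrevnd : ∀ S : Finset (Fin n), (S.toList.map Fin.rev).Nodup :=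
    fun S => (Finset.nodup_toList S).map Fin.rev_injective
  have hmemL : ∀ (S : Finset (Fin n)) (u : Fin n), u ∈ S.toList ↔ u ∈ S :=
    fun S u => Finset.mem_toList
  have hmemR : ∀ (S : Finset (Fin n)) (u : Fin n), u ∈ S.toList.map Fin.rev ↔ u.rev ∈ S := by
    intro S u; rw [mem_map_rev, Finset.mem_toList]
  -- exclusion of reversed interior indices
  have hexcl : ∀ Z : Finset (Fin n), (∀ z ∈ Z, Intr n z) →
      ∀ S ⊆ Z, ∀ u : Fin n, u ∈ S → u.rev ∉ S := by
    intro Z hZ S hS u hu hur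
    exact intr_rev_not hn (hZ _ (hS hu)) (hZ _ (hS hur))
  -- the trivial-case helper for non-achievable patterns
  have vac : (¬ ((d (false, false) = d (false, true) ∧ d (true, false) = d (true, true)) ∨
        (d (false, false) = d (true, false) ∧ d (false, true) = d (true, true)))) →
      ∃ L : List (Equiv.Perm (RPos n)),
      L.length ≤ 6 * (X.card * 2 ^ X.card + Y.card) ∧
      (∀ m ∈ L, m ∈ RMoves n) ∧
      (∀ p : RPos n,
        (∀ x ∈ X, ∀ y ∈ Y,
          clusterConfig n (solvedColoring n ∘ ⇑g⁻¹) x y = d → p ∉ cluster n x y) →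
        L.prod p = p) ∧
      (∀ x ∈ X, ∀ y ∈ Y,
        clusterConfig n (solvedColoring n ∘ ⇑g⁻¹) x y = d →
        ∀ p ∈ cluster n x y,
          (solvedColoring n ∘ ⇑(L.prod * g)⁻¹) p = solvedColoring n p) := by
    intro hne
    apply trivial_case hn d X Y g
    intro x hx y hy hcfg p hp
    exfalso
    have hs := hstd x y (hX' x hx) (hY' y hy)
    rw [hcfg, standard_iff] at hs
    exact hne hs
  cases hdFF : d (false, false) <;> cases hdTF : d (true, false) <;>
    cases hdFT : d (false, true) <;> cases hdTT : d (true, true)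
  -- case 1 : FFFF
  · apply package hn d X Y g
    apply assemble hn d X Y hX' hY' (solvedColoring n ∘ ⇑g⁻¹)
      (fun S T => ffffL n S.toList (S.toList.map Fin.rev) T.toList)
    · intro S T
      simp only [ffffL, List.length_append, shape1L_length, shape2L_length,
        List.length_map, Finset.length_toList]
      omega
    · intro S T m hm
      simp only [ffffL, List.mem_append] at hm
      rcases hm with h | h
      · exact shape2L_mem h
      · exact shape1L_mem h
    · intro S T hSX hTY p hp
      apply ffff_fix _ _ _ (hndS S) (hrevnd S) (hndS T)
      rcases hp with ⟨h1, h2⟩ | ⟨h1, h2⟩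
      · refine Or.inl ⟨?_, ?_, ?_, ?_⟩
        · rw [hmemL]; exact h1
        · rw [hmemL]; exact h2
        · rw [hmemR]; exact h2
        · rw [hmemR, Fin.rev_rev]; exact h1
      · refine Or.inr ⟨?_, ?_⟩
        · rw [hmemL]; exact h1
        · rw [hmemL]; exact h2
    · intro S T hSX hTY x hxS y hyT hcfg p hp
      obtain ⟨e1, e2, e3, e4⟩ := cfg_vals hcfg
      rw [hdFF] at e1; rw [hdTF] at e2; rw [hdFT] at e3; rw [hdTT] at e4
      refine ffff_solve (hndS S) (hrevnd S) (hndS T)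
        ((hmemL S x).mpr hxS) (by rw [hmemR, Fin.rev_rev]; exact hxS)
        ((hmemL T y).mpr hyT)
        (by rw [hmemL]; exact hexcl X hX' S hSX x hxS)
        (by rw [hmemR]; exact hexcl X hX' S hSX x hxS)
        (by rw [hmemL]; exact hexcl Y hY' T hTY y hyT)
        hpair e1 e2 e3 e4 p hp
  -- case 2 : FFFT (vacuous)
  · exact vac (by rw [hdFF, hdTF, hdFT, hdTT]; simp)
  -- case 3 : FFTF (vacuous)
  · exact vac (by rw [hdFF, hdTF, hdFT, hdTT]; simp)
  -- case 4 : FFTT (shape1)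
  · apply package hn d X Y g
    apply assemble hn d X Y hX' hY' (solvedColoring n ∘ ⇑g⁻¹)
      (fun S T => shape1L n S.toList T.toList)
    · intro S T
      simp only [shape1L_length, Finset.length_toList]
      omega
    · intro S T m hm
      exact shape1L_mem hm
    · intro S T hSX hTY p hp
      apply shape1_fix _ _ (hndS S) (hndS T)
      rcases hp with ⟨h1, h2⟩ | ⟨h1, h2⟩
      · exact Or.inl ⟨by rw [hmemL]; exact h1, by rw [hmemL]; exact h2⟩
      · exact Or.inr ⟨by rw [hmemL]; exact h1, by rw [hmemL]; exact h2⟩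
    · intro S T hSX hTY x hxS y hyT hcfg p hp
      obtain ⟨e1, e2, e3, e4⟩ := cfg_vals hcfg
      rw [hdFF] at e1; rw [hdTF] at e2; rw [hdFT] at e3; rw [hdTT] at e4
      exact shape1_solve (hndS S) (hndS T) ((hmemL S x).mpr hxS) ((hmemL T y).mpr hyT)
        (by rw [hmemL]; exact hexcl X hX' S hSX x hxS)
        (by rw [hmemL]; exact hexcl Y hY' T hTY y hyT)
        hpair e1 e2 e3 e4 p hp
  -- case 5 : FTFF (vacuous)
  · exact vac (by rw [hdFF, hdTF, hdFT, hdTT]; simp)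
  -- case 6 : FTFT (shape2)
  · apply package hn d X Y g
    apply assemble hn d X Y hX' hY' (solvedColoring n ∘ ⇑g⁻¹)
      (fun S T => shape2L n S.toList T.toList)
    · intro S T
      simp only [shape2L_length, Finset.length_toList]
      omega
    · intro S T m hm
      exact shape2L_mem hm
    · intro S T hSX hTY p hp
      apply shape2_fix _ _ (hndS S) (hndS T)
      rcases hp with ⟨h1, h2⟩ | ⟨h1, h2⟩
      · exact Or.inl ⟨by rw [hmemL]; exact h1, by rw [hmemL]; exact h2⟩
      · exact Or.inr ⟨by rw [hmemL]; exact h1, by rw [hmemL]; exact h2⟩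
    · intro S T hSX hTY x hxS y hyT hcfg p hp
      obtain ⟨e1, e2, e3, e4⟩ := cfg_vals hcfg
      rw [hdFF] at e1; rw [hdTF] at e2; rw [hdFT] at e3; rw [hdTT] at e4
      exact shape2_solve (hndS S) (hndS T) ((hmemL S x).mpr hxS) ((hmemL T y).mpr hyT)
        (by rw [hmemL]; exact hexcl X hX' S hSX x hxS)
        (by rw [hmemL]; exact hexcl Y hY' T hTY y hyT)
        hpair e1 e2 e3 e4 p hp
  -- case 7 : FTTF (vacuous, diagonal)
  · exact vac (by rw [hdFF, hdTF, hdFT, hdTT]; simp)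
  -- case 8 : FTTT (vacuous)
  · exact vac (by rw [hdFF, hdTF, hdFT, hdTT]; simp)
  -- case 9 : TFFF (vacuous)
  · exact vac (by rw [hdFF, hdTF, hdFT, hdTT]; simp)
  -- case 10 : TFFT (vacuous, diagonal)
  · exact vac (by rw [hdFF, hdTF, hdFT, hdTT]; simp)
  -- case 11 : TFTF (shape2 centred at x.rev)
  · apply package hn d X Y g
    apply assemble hn d X Y hX' hY' (solvedColoring n ∘ ⇑g⁻¹)
      (fun S T => shape2L n (S.toList.map Fin.rev) T.toList)
    · intro S T
      simp only [shape2L_length, List.length_map, Finset.length_toList]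
      omega
    · intro S T m hm
      exact shape2L_mem hm
    · intro S T hSX hTY p hp
      apply shape2_fix _ _ (hrevnd S) (hndS T)
      rcases hp with ⟨h1, h2⟩ | ⟨h1, h2⟩
      · refine Or.inl ⟨?_, ?_⟩
        · rw [hmemR]; exact h2
        · rw [hmemR, Fin.rev_rev]; exact h1
      · exact Or.inr ⟨by rw [hmemL]; exact h1, by rw [hmemL]; exact h2⟩
    · intro S T hSX hTY x hxS y hyT hcfg p hp
      obtain ⟨e1, e2, e3, e4⟩ := cfg_vals hcfg
      rw [hdFF] at e1; rw [hdTF] at e2; rw [hdFT] at e3; rw [hdTT] at e4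
      have hsol := shape2_solve (hrevnd S) (hndS T)
        (show x.rev ∈ S.toList.map Fin.rev by rw [hmemR, Fin.rev_rev]; exact hxS)
        ((hmemL T y).mpr hyT)
        (show x.rev.rev ∉ S.toList.map Fin.rev by
          rw [Fin.rev_rev, hmemR]; exact hexcl X hX' S hSX x hxS)
        (show y.rev ∉ T.toList by rw [hmemL]; exact hexcl Y hY' T hTY y hyT)
        hpair e2 (by rw [Fin.rev_rev]; exact e1) e4 (by rw [Fin.rev_rev]; exact e3)
        p (by rwa [cluster_rev_left])
      obtain ⟨q, hq, hrest⟩ := hsol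
      exact ⟨q, by rwa [cluster_rev_left] at hq, hrest⟩
  -- case 12 : TFTT (vacuous)
  · exact vac (by rw [hdFF, hdTF, hdFT, hdTT]; simp)
  -- case 13 : TTFF (shape1 centred at y.rev)
  · apply package hn d X Y g
    apply assemble hn d X Y hX' hY' (solvedColoring n ∘ ⇑g⁻¹)
      (fun S T => shape1L n S.toList (T.toList.map Fin.rev))
    · intro S T
      simp only [shape1L_length, List.length_map, Finset.length_toList]
      omega
    · intro S T m hm
      exact shape1L_mem hm
    · intro S T hSX hTY p hp
      apply shape1_fix _ _ (hndS S) (hrevnd T)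
      rcases hp with ⟨h1, h2⟩ | ⟨h1, h2⟩
      · exact Or.inl ⟨by rw [hmemL]; exact h1, by rw [hmemL]; exact h2⟩
      · refine Or.inr ⟨?_, ?_⟩
        · rw [hmemR]; exact h2
        · rw [hmemR, Fin.rev_rev]; exact h1
    · intro S T hSX hTY x hxS y hyT hcfg p hp
      obtain ⟨e1, e2, e3, e4⟩ := cfg_vals hcfg
      rw [hdFF] at e1; rw [hdTF] at e2; rw [hdFT] at e3; rw [hdTT] at e4
      have hsol := shape1_solve (hndS S) (hrevnd T)
        ((hmemL S x).mpr hxS)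
        (show y.rev ∈ T.toList.map Fin.rev by rw [hmemR, Fin.rev_rev]; exact hyT)
        (show x.rev ∉ S.toList by rw [hmemL]; exact hexcl X hX' S hSX x hxS)
        (show y.rev.rev ∉ T.toList.map Fin.rev by
          rw [Fin.rev_rev, hmemR]; exact hexcl Y hY' T hTY y hyT)
        hpair e3 e4 (by rw [Fin.rev_rev]; exact e1) (by rw [Fin.rev_rev]; exact e2)
        p (by rwa [cluster_rev_right])
      obtain ⟨q, hq, hrest⟩ := hsol
      exact ⟨q, by rwa [cluster_rev_right] at hq, hrest⟩
  -- case 14 : TTFT (vacuous)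
  · exact vac (by rw [hdFF, hdTF, hdFT, hdTT]; simp)
  -- case 15 : TTTF (vacuous)
  · exact vac (by rw [hdFF, hdTF, hdFT, hdTT]; simp)
  -- case 16 : TTTT (already solved)
  · apply trivial_case hn d X Y g
    intro x hx y hy hcfg p hp
    obtain ⟨e1, e2, e3, e4⟩ := cfg_vals hcfg
    rw [hdFF] at e1; rw [hdTF] at e2; rw [hdFT] at e3; rw [hdTT] at e4
    have hval : ∀ u v : Fin n, ∀ b : Bool,
        (solvedColoring n ∘ ⇑g⁻¹) (u, v, true) = true →
        (solvedColoring n ∘ ⇑g⁻¹) (u, v, b) = solvedColoring n ((u, v, b) : RPos n) := by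
      intro u v b h
      cases b
      · rw [hpair u v, h]; rfl
      · rw [h]; rfl
    obtain ⟨u, v, b⟩ := p
    obtain ⟨h1 | h1, h2 | h2⟩ := hp <;> dsimp only at h1 h2 <;>
      rw [h1, h2]
    · exact hval x y b e1
    · exact hval x y.rev b e3
    · exact hval x.rev y b e2
    · exact hval x.rev y.rev b e4
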